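/- Let a ∈ A and suppose the sequence (c_j) in A satisfies [a] = Σ_{j=0}^∞ s_φ(c_j)·V^j(1) in W(A). Then for every i ≥ 1, φ^{i+1}(c_{i+1}) − φ^i(c_i)·a^{p^i(p−1)} lies in p^i·A. -/

import Mathlib

open WittVector

/-- `x = Σ_{i=0}^∞ s(a_i)·V^i(1)` in `W(A)`: for every `n`, the difference
`x − Σ_{i<n} s(a_i)·V^i(1)` lies in the image of `V^n`. -/
def IsVSeries (p : ℕ) [Fact p.Prime] {k : Type*} [CommRing k]
    (s : WittVector p k →+* WittVector p (WittVector p k))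
    (x : WittVector p (WittVector p k)) (a : ℕ → WittVector p k) : Prop :=
  ∀ n : ℕ, ∃ y : WittVector p (WittVector p k),
    x - ∑ i ∈ Finset.range n, s (a i) * (⇑(WittVector.verschiebung))^[i] 1
      = (⇑(WittVector.verschiebung))^[n] y

section Aux

variable {p : ℕ} [hp : Fact p.Prime]

/-- Ghost component `m` of `V^j x` when `j ≤ m`. -/
lemma ghost_iterate_verschiebung {R : Type*} [CommRing R] :
    ∀ (j m : ℕ), j ≤ m → ∀ x : WittVector p R,
      ghostComponent m ((⇑(verschiebung : WittVector p R →+ WittVector p R))^[j] x)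
        = (p : R) ^ j * ghostComponent (m - j) x := by
  intro j
  induction j with
  | zero => intro m _ x; simp
  | succ j ih =>
    intro m hm x
    obtain ⟨m', rfl⟩ : ∃ m', m = m' + 1 := ⟨m - 1, by omega⟩
    rw [Function.iterate_succ_apply', ghostComponent_verschiebung,
      ih m' (by omega) x, Nat.succ_sub_succ]
    ring

/-- Ghost component `m` of `V^j x` vanishes when `m < j`. -/
lemma ghost_iterate_verschiebung_zero {R : Type*} [CommRing R] :
    ∀ (j m : ℕ), m < j → ∀ x : WittVector p R,
      ghostComponent m ((⇑(verschiebung : WittVector p R →+ WittVector p R))^[j] x) = 0 := by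
  intro j
  induction j with
  | zero => omega
  | succ j ih =>
    intro m hm x
    rw [Function.iterate_succ_apply']
    cases m with
    | zero => exact ghostComponent_zero_verschiebung _
    | succ m => rw [ghostComponent_verschiebung, ih m (by omega) x, mul_zero]

lemma ghost_zero_eq_coeff {R : Type*} [CommRing R] (x : WittVector p R) :
    ghostComponent 0 x = x.coeff 0 := by
  simp [ghostComponent_apply, wittPolynomial_zero]

variable {k : Type*} [CommRing k] [CharP k p]

lemma versch_injective :
    Function.Injective (verschiebung : WittVector p k → WittVector p k) := by
  intro x y h
  ext n
  have := congrArg (fun z => WittVector.coeff z (n + 1)) h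
  simpa [verschiebung_coeff_succ] using this

variable [PerfectRing k p]

lemma witt_p_torsionfree (x : WittVector p k) (h : (p : WittVector p k) * x = 0) :
    x = 0 := by
  have h1 : verschiebung (frobenius x) = 0 := by
    rw [verschiebung_frobenius, mul_comm]
    exact h
  have h2 : frobenius x = 0 := by
    apply versch_injective (p := p) (k := k)
    rw [h1, map_zero]
  exact (frobenius_bijective p k).injective (by rw [h2, map_zero])

lemma witt_p_pow_cancel (m : ℕ) (x y : WittVector p k)
    (h : (p : WittVector p k) ^ m * x = (p : WittVector p k) ^ m * y) : x = y := by
  induction m with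
  | zero => simpa using h
  | succ m ih =>
    apply ih
    have h0 : (p : WittVector p k) * ((p : WittVector p k) ^ m * x
        - (p : WittVector p k) ^ m * y) = 0 := by
      rw [pow_succ'] at h
      linear_combination h
    have h1 := witt_p_torsionfree _ h0
    linear_combination h1

/-- Frobenius is a lift of the `p`-power map: `x^p = F x + p β`. -/
lemma frobenius_lift (x : WittVector p k) :
    ∃ β : WittVector p k, x ^ p = frobenius x + (p : WittVector p k) * β := by
  set w : WittVector p k := x ^ p - frobenius x with hw
  have hw0 : w.coeff 0 = 0 := by
    rw [← ghost_zero_eq_coeff, hw, map_sub, map_pow, ghost_zero_eq_coeff,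
      ghost_zero_eq_coeff, coeff_frobenius_charP, sub_self]
  set w' : WittVector p k := WittVector.mk p (fun n => w.coeff (n + 1)) with hw'
  have hV : verschiebung w' = w := by
    ext n
    cases n with
    | zero => rw [verschiebung_coeff_zero, hw0]
    | succ n => rw [verschiebung_coeff_succ, hw', WittVector.coeff_mk]
  set u : WittVector p k := (frobeniusEquiv p k).symm w' with hu
  have hF : frobenius u = w' := by
    have h := (frobeniusEquiv p k).apply_symm_apply w'
    simpa [WittVector.frobeniusEquiv_apply, hu] using h
  refine ⟨u, ?_⟩
  have hfin : w = (p : WittVector p k) * u := by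
    rw [← hV, ← hF, verschiebung_frobenius, mul_comm]
  rw [hw] at hfin
  linear_combination hfin

/-- The key binomial divisibility. -/
lemma binom_key {R : Type*} [CommRing R] (hpp : p.Prime) (hodd : Odd p)
    {i : ℕ} (hi : 1 ≤ i) (x y β : R) (hxy : x ^ p = y + (p : R) * β) :
    (p : R) ^ (2 * i + 1) ∣
      x ^ p ^ (i + 1) - y ^ p ^ i
        - (p : R) * (x ^ p ^ i - y ^ p ^ (i - 1)) * x ^ (p ^ i * (p - 1)) := by
  obtain ⟨i', rfl⟩ : ∃ i', i = i' + 1 := ⟨i - 1, by omega⟩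
  simp only [Nat.add_sub_cancel]
  have hp3 : 3 ≤ p := by
    have h1 := hpp.two_le
    have h2 := Nat.odd_iff.mp hodd
    omega
  have hdvdε : (p : R) ^ (i' + 1) ∣ x ^ p ^ (i' + 1) - y ^ p ^ i' := by
    have h1 : (p : R) ∣ x ^ p - y := ⟨β, by linear_combination hxy⟩
    have h2 := dvd_sub_pow_of_dvd_sub h1 i'
    have h3 : (x ^ p) ^ p ^ i' = x ^ p ^ (i' + 1) := by
      rw [← pow_mul, ← pow_succ']
    rw [h3] at h2
    exact h2
  obtain ⟨e, he⟩ := hdvdε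
  -- rewrite the goal into core shape
  have hy1 : y ^ p ^ (i' + 1) = (y ^ p ^ i') ^ p := by rw [← pow_mul, ← pow_succ]
  have hx1 : x ^ p ^ (i' + 1 + 1) = (x ^ p ^ (i' + 1)) ^ p := by rw [← pow_mul, ← pow_succ]
  have hx2 : x ^ (p ^ (i' + 1) * (p - 1)) = (x ^ p ^ (i' + 1)) ^ (p - 1) := pow_mul x _ _
  have hy2 : y ^ p ^ i' = x ^ p ^ (i' + 1) - (p : R) ^ (i' + 1) * e := by
    linear_combination -he
  rw [hy1, hx1, hx2, hy2]
  generalize x ^ p ^ (i' + 1) = Z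
  have h7 : Z - (Z - (p : R) ^ (i' + 1) * e) = (p : R) ^ (i' + 1) * e := by ring
  rw [h7]
  -- now the core computation, with ε := p^(i'+1) * e
  have hdvdnε : (p : R) ^ (i' + 1) ∣ -((p : R) ^ (i' + 1) * e) :=
    (dvd_neg).mpr (dvd_mul_right _ _)
  obtain ⟨n, hn⟩ : ∃ n, p = n + 2 := ⟨p - 2, by omega⟩
  have expand : (Z - (p : R) ^ (i' + 1) * e) ^ p
      = ∑ m ∈ Finset.range (p + 1),
          Z ^ m * (-((p : R) ^ (i' + 1) * e)) ^ (p - m) * (p.choose m : R) := by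
    rw [sub_eq_add_neg, add_pow]
  have hsplit : ∑ m ∈ Finset.range (p + 1),
        Z ^ m * (-((p : R) ^ (i' + 1) * e)) ^ (p - m) * (p.choose m : R)
      = (∑ m ∈ Finset.range (n + 1),
          Z ^ m * (-((p : R) ^ (i' + 1) * e)) ^ (p - m) * (p.choose m : R))
        + Z ^ (n + 1) * (-((p : R) ^ (i' + 1) * e)) ^ (p - (n + 1)) * (p.choose (n + 1) : R)
        + Z ^ (n + 2) * (-((p : R) ^ (i' + 1) * e)) ^ (p - (n + 2)) * (p.choose (n + 2) : R) := by
    rw [hn]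
    rw [Finset.sum_range_succ, Finset.sum_range_succ]
  have hlast : Z ^ (n + 2) * (-((p : R) ^ (i' + 1) * e)) ^ (p - (n + 2))
        * (p.choose (n + 2) : R) = Z ^ p := by
    rw [← hn, Nat.sub_self, pow_zero, Nat.choose_self]
    rw [hn]; ring
  have hpred : Z ^ (n + 1) * (-((p : R) ^ (i' + 1) * e)) ^ (p - (n + 1))
        * (p.choose (n + 1) : R)
      = -((p : R) * ((p : R) ^ (i' + 1) * e) * Z ^ (p - 1)) := by
    have h1 : p - (n + 1) = 1 := by omega
    have h2 : p.choose (n + 1) = p := by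
      have h5 := Nat.choose_symm (show n + 1 ≤ p by omega)
      rw [show p - (n + 1) = 1 by omega] at h5
      rw [← h5, Nat.choose_one_right]
    have h3 : n + 1 = p - 1 := by omega
    rw [h1, h2, h3]
    push_cast
    ring
  have hkey : Z ^ p - (Z - (p : R) ^ (i' + 1) * e) ^ p
        - (p : R) * ((p : R) ^ (i' + 1) * e) * Z ^ (p - 1)
      = -(∑ m ∈ Finset.range (n + 1),
          Z ^ m * (-((p : R) ^ (i' + 1) * e)) ^ (p - m) * (p.choose m : R)) := by
    rw [expand, hsplit, hlast, hpred]
    ring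
  rw [hkey]
  apply dvd_neg.mpr
  apply Finset.dvd_sum
  intro m hm
  have hmn : m ≤ n := by have := Finset.mem_range.mp hm; omega
  rcases Nat.eq_zero_or_pos m with rfl | hm1
  · have h1 : ((p : R) ^ (i' + 1)) ^ p ∣ (-((p : R) ^ (i' + 1) * e)) ^ p :=
      pow_dvd_pow_of_dvd hdvdnε p
    have h2 : (p : R) ^ (2 * (i' + 1) + 1) ∣ ((p : R) ^ (i' + 1)) ^ p := by
      rw [← pow_mul]
      apply pow_dvd_pow
      have h4 : (i' + 1) * 3 ≤ (i' + 1) * p := Nat.mul_le_mul_left _ hp3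
      omega
    have h3 : (p : R) ^ (2 * (i' + 1) + 1) ∣ (-((p : R) ^ (i' + 1) * e)) ^ (p - 0) := by
      rw [Nat.sub_zero]; exact h2.trans h1
    exact (h3.mul_left _).mul_right _
  · have hcd : (p : R) ∣ (p.choose m : R) :=
      Nat.cast_dvd_cast (hpp.dvd_choose_self (by omega) (by omega))
    have hεsq : (p : R) ^ (2 * (i' + 1)) ∣ (-((p : R) ^ (i' + 1) * e)) ^ (p - m) := by
      obtain ⟨d, hd⟩ : ∃ d, p - m = 2 + d := ⟨p - m - 2, by omega⟩
      have h5 : ((p : R) ^ (i' + 1)) ^ 2 ∣ (-((p : R) ^ (i' + 1) * e)) ^ 2 :=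
        pow_dvd_pow_of_dvd hdvdnε 2
      rw [← pow_mul, mul_comm (i' + 1) 2] at h5
      rw [hd, pow_add]
      exact h5.mul_right _
    have h6 : (p : R) ^ (2 * (i' + 1)) * (p : R)
        ∣ (-((p : R) ^ (i' + 1) * e)) ^ (p - m) * (p.choose m : R) :=
      mul_dvd_mul hεsq hcd
    rw [← pow_succ] at h6
    rw [mul_assoc]
    exact h6.mul_left _

end Aux

theorem stmt_13 (p : ℕ) [Fact p.Prime] (hp : Odd p)
    (k : Type*) [CommRing k] [CharP k p] [PerfectRing k p]
    (s : WittVector p k →+* WittVector p (WittVector p k))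
    (hs : ∀ (a : WittVector p k) (n : ℕ),
      WittVector.ghostComponent n (s a) = (⇑(WittVector.frobenius))^[n] a)
    (a : WittVector p k) (c : ℕ → WittVector p k)
    (hc : IsVSeries p s (WittVector.teichmuller p a) c) :
    ∀ i : ℕ, 1 ≤ i → ∃ t : WittVector p k,
      (⇑(WittVector.frobenius))^[i + 1] (c (i + 1))
        - (⇑(WittVector.frobenius))^[i] (c i) * a ^ (p ^ i * (p - 1))
        = (p : WittVector p k) ^ i * t := by
  have hpp : p.Prime := Fact.out
  -- Step 1: the exact ghost identity
  have key : ∀ m : ℕ, a ^ p ^ m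
      = ∑ j ∈ Finset.range (m + 1),
          (p : WittVector p k) ^ j * (⇑(WittVector.frobenius))^[m] (c j) := by
    intro m
    obtain ⟨y, hy⟩ := hc (m + 1)
    have h := congrArg (ghostComponent m) hy
    rw [map_sub, map_sum, ghostComponent_teichmuller,
      ghost_iterate_verschiebung_zero (m + 1) m (by omega) y] at h
    have hterm : ∀ j ∈ Finset.range (m + 1),
        ghostComponent m (s (c j)
            * (⇑(verschiebung))^[j] (1 : WittVector p (WittVector p k)))
          = (p : WittVector p k) ^ j * (⇑(WittVector.frobenius))^[m] (c j) := by
      intro j hj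
      have hjm : j ≤ m := by have := Finset.mem_range.mp hj; omega
      rw [map_mul, hs, ghost_iterate_verschiebung j m hjm, map_one, mul_one, mul_comm]
    rw [Finset.sum_congr rfl hterm] at h
    linear_combination h
  -- Step 2
  have key2 : ∀ m : ℕ,
      (p : WittVector p k) ^ (m + 1) * (⇑(WittVector.frobenius))^[m + 1] (c (m + 1))
        = a ^ p ^ (m + 1) - (WittVector.frobenius a) ^ p ^ m := by
    intro m
    have h1 := key (m + 1)
    have h2 : WittVector.frobenius (a ^ p ^ m) = WittVector.frobenius (∑ j ∈ Finset.range (m + 1),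
        (p : WittVector p k) ^ j * (⇑(WittVector.frobenius))^[m] (c j)) := by rw [← key m]
    simp only [map_pow, map_sum, map_mul, map_natCast] at h2
    have h3 : ∀ j ∈ Finset.range (m + 1),
        (p : WittVector p k) ^ j * WittVector.frobenius ((⇑(WittVector.frobenius))^[m] (c j))
          = (p : WittVector p k) ^ j * (⇑(WittVector.frobenius))^[m + 1] (c j) := by
      intro j _
      rw [← Function.iterate_succ_apply' WittVector.frobenius m (c j)]
    rw [Finset.sum_congr rfl h3] at h2
    rw [Finset.sum_range_succ] at h1
    rw [h1, ← h2]
    ring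
  -- Step 3
  intro i hi
  obtain ⟨i', rfl⟩ : ∃ i', i = i' + 1 := ⟨i - 1, by omega⟩
  obtain ⟨β, hβ⟩ := frobenius_lift (p := p) (k := k) a
  obtain ⟨t, ht⟩ := binom_key (R := WittVector p k) hpp hp
    (i := i' + 1) (by omega) a (WittVector.frobenius a) β hβ
  simp only [Nat.add_sub_cancel] at ht
  refine ⟨t, ?_⟩
  apply witt_p_pow_cancel (p := p) (k := k) (i' + 2)
  have hA := key2 i'
  have hB := key2 (i' + 1)
  linear_combination hB - (p : WittVector p k) * a ^ (p ^ (i' + 1) * (p - 1)) * hA + ht
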